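/- Let p, m, r, d ∈ ℕ with r ≥ 1, and let Γ̃ ∈ ℝ^{p×m} be such that Γ̃ Γ̃ᵀ is invertible (full row rank p). Let G be an rp × rm block matrix with blocks G_{ij} ∈ ℝ^{p×m} such that G_{ij} = 0 whenever i + j ≤ r and G_{r+1−j, j} = (−1)^{j−1} Γ̃ for each j = 1, …, r. Let P₁, …, P_r ∈ ℝ^{d×p} satisfy Σ_{i=1}^{r} P_i G_{ij} = 0 for every j = 1, …, r−1. Then P_i = 0 for all i = 2, …, r. -/
import Mathlib


open Matrix

theorem stmt12 (p m r d : ℕ) (hr : 1 ≤ r)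
    (Γ : Matrix (Fin p) (Fin m) ℝ) (hΓ : IsUnit (Γ * Γᵀ))
    (G : Fin r → Fin r → Matrix (Fin p) (Fin m) ℝ)
    (hzero : ∀ i j : Fin r, (i : ℕ) + (j : ℕ) + 2 ≤ r → G i j = 0)
    (hanti : ∀ i j : Fin r, (i : ℕ) + (j : ℕ) + 1 = r → G i j = ((-1 : ℝ) ^ (j : ℕ)) • Γ)
    (P : Fin r → Matrix (Fin d) (Fin p) ℝ)
    (hP : ∀ j : Fin r, (j : ℕ) + 2 ≤ r → ∑ i, P i * G i j = 0) :
    ∀ i : Fin r, 1 ≤ (i : ℕ) → P i = 0 := by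
  suffices H : ∀ n : ℕ, ∀ i : Fin r, r - (i : ℕ) ≤ n → 1 ≤ (i : ℕ) → P i = 0 by
    intro i hi; exact H r i (Nat.sub_le _ _) hi
  intro n
  induction n with
  | zero => intro i hle hi; have := i.isLt; omega
  | succ n ih =>
    intro i hle hi1
    have hilt := i.isLt
    set j : Fin r := ⟨r - 1 - (i : ℕ), by omega⟩ with hj
    have hj2 : (j : ℕ) + 2 ≤ r := by simp [hj]; omega
    have heq := hP j hj2
    have hsum : ∑ k, P k * G k j = P i * G i j := by
      apply Finset.sum_eq_single
      · intro k _ hk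
        rcases lt_or_gt_of_ne (fun h : (k : ℕ) = (i : ℕ) => hk (Fin.ext h)) with hlt | hgt
        · rw [hzero k j (by simp [hj]; omega), Matrix.mul_zero]
        · rw [ih k (by omega) (by omega), Matrix.zero_mul]
      · intro h; exact absurd (Finset.mem_univ i) h
    rw [hsum, hanti i j (by simp [hj]; omega)] at heq
    rw [Matrix.mul_smul, smul_eq_zero] at heq
    have hΓ0 : P i * Γ = 0 := by
      rcases heq with h | h
      · exact absurd h (by positivity)
      · exact h
    have hdet : IsUnit (Γ * Γᵀ).det := (Matrix.isUnit_iff_isUnit_det _).mp hΓ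
    have : P i * ((Γ * Γᵀ) * (Γ * Γᵀ)⁻¹) = 0 := by
      rw [← Matrix.mul_assoc, ← Matrix.mul_assoc, hΓ0, Matrix.zero_mul, Matrix.zero_mul]
    rwa [Matrix.mul_nonsing_inv _ hdet, Matrix.mul_one] at this
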